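/- arXiv:2306.00922 — 4 statements merged into one kernel-verified Lean document; each statement's English description precedes it below -/
import Mathlib

section
/- Let p, q, r ∈ ℂ and let u, v, w ∈ ℂ satisfy u² + v² + w² = −p/2, u²v² + u²w² + v²w² = p²/16 − r/4, and u·v·w = −q/8. Then y = u + v + w is a root of the quartic y⁴ + p·y² + q·y + r = 0. -/
/-- Euler's method: `u + v + w` is a root of the depressed quartic. -/
theorem euler_quartic_root (p q r u v w : ℂ)
    (h1 : u ^ 2 + v ^ 2 + w ^ 2 = -p / 2)
    (h2 : u ^ 2 * v ^ 2 + u ^ 2 * w ^ 2 + v ^ 2 * w ^ 2 = p ^ 2 / 16 - r / 4)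
    (h3 : u * v * w = -q / 8) :
    (u + v + w) ^ 4 + p * (u + v + w) ^ 2 + q * (u + v + w) + r = 0 := by
  linear_combination (2*(u+v+w)^2 - (u^2+v^2+w^2 - p/2)) * h1 + 4*h2 + 8*(u+v+w)*h3
end

section
/- Let p, q, r ∈ ℂ and let u, v, w ∈ ℂ satisfy u² + v² + w² = −p/2, u²v² + u²w² + v²w² = p²/16 − r/4, and u·v·w = −q/8. Then all four numbers u+v+w, u−v−w, −u+v−w, −u−v+w are roots of y⁴ + p·y² + q·y + r = 0. -/
/-- Euler's method: all four sign combinations give roots of the depressed quartic. -/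
theorem euler_quartic_four_roots (p q r u v w : ℂ)
    (h1 : u ^ 2 + v ^ 2 + w ^ 2 = -p / 2)
    (h2 : u ^ 2 * v ^ 2 + u ^ 2 * w ^ 2 + v ^ 2 * w ^ 2 = p ^ 2 / 16 - r / 4)
    (h3 : u * v * w = -q / 8) :
    ((u + v + w) ^ 4 + p * (u + v + w) ^ 2 + q * (u + v + w) + r = 0) ∧
    ((u - v - w) ^ 4 + p * (u - v - w) ^ 2 + q * (u - v - w) + r = 0) ∧
    ((-u + v - w) ^ 4 + p * (-u + v - w) ^ 2 + q * (-u + v - w) + r = 0) ∧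
    ((-u - v + w) ^ 4 + p * (-u - v + w) ^ 2 + q * (-u - v + w) + r = 0) := by
  have hp : p = -2*(u^2+v^2+w^2) := by linear_combination 2*h1
  have hq : q = -8*(u*v*w) := by linear_combination 8*h3
  have hr : r = p^2/4 - 4*(u^2*v^2 + u^2*w^2 + v^2*w^2) := by linear_combination 4*h2
  subst hp hq hr
  refine ⟨by ring, by ring, by ring, by ring⟩
end

section
/- Let K be a field of characteristic zero and L/K a Galois extension with [L : K] = p for a prime p. If K contains a primitive p-th root of unity, then there exists β ∈ L with β^p ∈ K and L = K(β). -/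
/-- A Galois extension of prime degree `p` over a field containing a primitive
`p`-th root of unity is a simple radical extension. -/
theorem galois_prime_degree_is_radical (K L : Type*) [Field K] [Field L]
    [CharZero K] [Algebra K L] [FiniteDimensional K L] [IsGalois K L]
    (p : ℕ) (hp : p.Prime) (hdim : Module.finrank K L = p)
    (ζ : K) (hζ : IsPrimitiveRoot ζ p) :
    ∃ β : L, β ^ p ∈ (algebraMap K L).range ∧ IntermediateField.adjoin K {β} = ⊤ := by
  have hfact : Fact p.Prime := ⟨hp⟩
  have hcard : Nat.card (L ≃ₐ[K] L) = p := by
    rw [IsGalois.card_aut_eq_finrank, hdim]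
  have hcyc : IsCyclic (L ≃ₐ[K] L) := isCyclic_of_prime_card hcard
  have hK : (primitiveRoots (Module.finrank K L) K).Nonempty := by
    refine ⟨ζ, ?_⟩
    rw [hdim, mem_primitiveRoots hp.pos]
    exact hζ
  obtain ⟨α, hα1, hα2⟩ := exists_root_adjoin_eq_top_of_isCyclic K L hK
  rw [hdim] at hα1
  exact ⟨α, hα1, hα2⟩
end

section
/- Natural irrationalities: let K be a field of characteristic zero, f ∈ K[X], and M the splitting field of f over K inside an algebraic closure Ω. Let L be an intermediate extension K ⊆ L ⊆ Ω and N = L·M the splitting field of f over L (the compositum of L and M in Ω). Then restriction of automorphisms gives a group isomorphism from Gal(N/L) onto the subgroup Gal(M/(M ∩ L)) of Gal(M/K). -/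
set_option maxHeartbeats 1000000
set_option synthInstance.maxHeartbeats 200000


open IntermediateField

/-- Natural irrationalities: restriction gives an isomorphism from `Gal(N/L)` onto the
subgroup `Gal(M/(M ∩ L))` of `Gal(M/K)`, where `M` is the splitting field of `f` over
`K` inside an algebraic closure `Ω`, `L` is any intermediate field, and `N = L ⊔ M`. -/
theorem natural_irrationalities (K Ω : Type*) [Field K] [CharZero K] [Field Ω]
    [Algebra K Ω] [IsAlgClosure K Ω] (f : Polynomial K)
    (M L N : IntermediateField K Ω)
    (hM : Polynomial.IsSplittingField K M f)
    (hN : N = L ⊔ M) (hLN : L ≤ N) :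
    ∃ ψ : (IntermediateField.extendScalars hLN ≃ₐ[L] IntermediateField.extendScalars hLN)
        →* (M ≃ₐ[K] M),
      Function.Injective ψ ∧
        ∀ τ : M ≃ₐ[K] M, τ ∈ ψ.range ↔ ∀ x : M, (x : Ω) ∈ L → τ x = x := by
  subst hN
  haveI := hM
  haveI : FiniteDimensional K M := Polynomial.IsSplittingField.finiteDimensional M f
  haveI : Normal K M := Normal.of_isSplittingField f
  haveI : CharZero L := charZero_of_injective_algebraMap (algebraMap K L).injective
  haveI : IsAlgClosed Ω := IsAlgClosure.isAlgClosed K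
  set N' := IntermediateField.extendScalars hLN with hN'def
  have hMN : M ≤ L ⊔ M := le_sup_right
  -- M is the adjoin of the root set of f
  have hMadj : M = adjoin K (f.rootSet Ω) := (isSplittingField_iff.mp hM).2
  -- N' is the adjoin of the root set of f over L
  have hNadj : N' = adjoin L (f.rootSet Ω) := by
    apply restrictScalars_injective K
    rw [extendScalars_restrictScalars, restrictScalars_adjoin_eq_sup, ← hMadj]
  -- N' is a splitting field of f over L
  have hrs : (f.map (algebraMap K L)).rootSet Ω = f.rootSet Ω := by
    simp [Polynomial.rootSet, Polynomial.aroots_map]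
  haveI hNsp : (f.map (algebraMap K L)).IsSplittingField L N' := by
    rw [hNadj, ← hrs]
    exact adjoin_rootSet_isSplittingField (IsAlgClosed.splits _)
  haveI : FiniteDimensional L N' := Polynomial.IsSplittingField.finiteDimensional N' (f.map (algebraMap K L))
  haveI : Normal L N' := Normal.of_isSplittingField (f.map (algebraMap K L))
  haveI : IsGalois L N' := ⟨⟩
  -- set up the tower K ⊆ M ⊆ N'
  have hmemN' : ∀ x : M, (x : Ω) ∈ N' := fun x => (mem_extendScalars hLN).mpr (hMN x.2)
  letI : Algebra M N' := ((IntermediateField.inclusion hMN).toRingHom : ↥M →+* ↥N').toAlgebra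
  haveI : IsScalarTower K M N' :=
    IsScalarTower.of_algebraMap_eq fun x => Subtype.ext rfl
  -- the restriction homomorphism
  let ψ₀ : (N' ≃ₐ[L] N') →* (N' ≃ₐ[K] N') :=
    MonoidHom.mk' (fun σ => σ.restrictScalars K) fun _ _ => rfl
  let ψ : (N' ≃ₐ[L] N') →* (M ≃ₐ[K] M) :=
    (AlgEquiv.restrictNormalHom (F := K) (K₁ := N') M).comp ψ₀
  have key : ∀ (σ : N' ≃ₐ[L] N') (x : M),
      ((ψ σ x : M) : Ω) = ((σ ⟨x, hmemN' x⟩ : N') : Ω) := by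
    intro σ x
    have := AlgEquiv.restrictNormal_commutes (σ.restrictScalars K) M x
    exact congrArg (Subtype.val) this
  refine ⟨ψ, ?_, ?_⟩
  · -- injectivity
    rw [← MonoidHom.ker_eq_bot_iff, eq_bot_iff]
    intro σ hσ
    rw [MonoidHom.mem_ker] at hσ
    rw [Subgroup.mem_bot]
    ext x
    obtain ⟨a, ha⟩ := x
    have ha' : a ∈ adjoin K ((L : Set Ω) ∪ (M : Set Ω)) := by
      rwa [adjoin_union, adjoin_self, adjoin_self]
    revert ha
    refine adjoin_induction (F := K)
      (p := fun a _ => ∀ ha' : a ∈ N', ((σ ⟨a, ha'⟩ : N') : Ω) = a)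
      ?_ ?_ ?_ ?_ ?_ ha'
    · rintro x (hx | hx) hxN
      · -- x ∈ L
        have : (⟨x, hxN⟩ : N') = algebraMap L N' ⟨x, hx⟩ := rfl
        rw [this, σ.commutes]
        rfl
      · -- x ∈ M
        have h1 := key σ ⟨x, hx⟩
        rw [hσ] at h1
        exact h1.symm
    · intro x hxN
      have h1 : (⟨(algebraMap K Ω x), hxN⟩ : N') = algebraMap L N' (algebraMap K L x) :=
        Subtype.ext rfl
      rw [h1, σ.commutes]
      rfl
    · intro x y hx hy ihx ihy hxy
      have hxN : x ∈ N' := hx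
      have hyN : y ∈ N' := hy
      have : (⟨x + y, hxy⟩ : N') = ⟨x, hxN⟩ + ⟨y, hyN⟩ := rfl
      rw [this, map_add]
      push_cast
      rw [ihx hxN, ihy hyN]
    · intro x hx ihx hxi
      have hxN : x ∈ N' := hx
      have : (⟨x⁻¹, hxi⟩ : N') = (⟨x, hxN⟩ : N')⁻¹ := rfl
      rw [this, map_inv₀]
      exact congrArg (fun t => t⁻¹) (ihx hxN)
    · intro x y hx hy ihx ihy hxy
      have hxN : x ∈ N' := hx
      have hyN : y ∈ N' := hy
      have : (⟨x * y, hxy⟩ : N') = ⟨x, hxN⟩ * ⟨y, hyN⟩ := rfl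
      rw [this, map_mul]
      push_cast
      rw [ihx hxN, ihy hyN]
  · -- range characterization
    intro τ
    constructor
    · rintro ⟨σ, rfl⟩ x hx
      apply Subtype.ext
      rw [key σ x]
      have : (⟨(x : Ω), hmemN' x⟩ : N') = algebraMap L N' ⟨x, hx⟩ := rfl
      rw [this, σ.commutes]
      rfl
    · intro hτ
      -- τ fixes the intermediate field E₀ = M ∩ L
      set E₀ : IntermediateField K M := IntermediateField.comap M.val L with hE₀
      have hτE : τ ∈ IntermediateField.fixingSubgroup E₀ := by
        intro x
        exact hτ x.1 x.2
      -- fixedField of the range is contained in E₀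
      have hsub : IntermediateField.fixedField ψ.range ≤ E₀ := by
        intro x hx
        -- x is fixed by every ψ σ
        have hfix : ∀ σ : N' ≃ₐ[L] N', σ ⟨x, hmemN' x⟩ = ⟨x, hmemN' x⟩ := by
          intro σ
          have := hx ⟨ψ σ, σ, rfl⟩
          apply Subtype.ext
          have h1 := key σ x
          have h2 : ψ σ x = x := this
          rw [h2] at h1
          exact h1.symm
        have hbot : (⟨(x : Ω), hmemN' x⟩ : N') ∈ (⊥ : IntermediateField L N') := by
          rw [← IsGalois.fixedField_fixingSubgroup (⊥ : IntermediateField L N'),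
            IntermediateField.fixingSubgroup_bot]
          intro g
          exact hfix g.1
        rw [IntermediateField.mem_bot] at hbot
        obtain ⟨y, hy⟩ := hbot
        have : (x : Ω) = (y : Ω) := congrArg Subtype.val hy.symm
        show (x : Ω) ∈ L
        rw [this]
        exact y.2
      have hle : IntermediateField.fixingSubgroup E₀ ≤ ψ.range := by
        rw [← IntermediateField.fixingSubgroup_fixedField (ψ.range)]
        intro g hg x
        exact hg ⟨x.1, hsub x.2⟩
      exact hle hτE
end
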